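/- Let S = ⊕_{g∈G} S_g be an epsilon-strongly G-graded ring with principal component R = S_e, and suppose that R is left noetherian or right noetherian. Then for any normal subgroup N of G, the induced G/N-grading of S, given by S = ⊕_{C∈G/N} S_C with S_C = ⊕_{g∈C} S_g, is an epsilon-strong G/N-grading of S. -/

import Mathlib

open Pointwise

/-- `A` is a `G`-grading of the ring `S`: `S` is the internal direct sum of the
additive subgroups `A g`, and `A g * A h ⊆ A (g * h)` for all `g h : G`. -/
def IsGrading {G S : Type*} [Group G] [Ring S] [DecidableEq G]
    (A : G → AddSubgroup S) : Prop :=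
  DirectSum.IsInternal A ∧ ∀ g h : G, ∀ x ∈ A g, ∀ y ∈ A h, x * y ∈ A (g * h)

/-- The grading `A` is epsilon-strong: it is symmetric (`A g * A g⁻¹ * A g = A g`) and
for every `g` there is `ε g ∈ A g * A g⁻¹` acting as a left identity on `A g`, with
`ε g⁻¹` acting as a right identity on `A g`.  Here `P * Q` denotes the additive subgroup
generated by products of elements of `P` and `Q`. -/
def IsEpsilonStrong {G S : Type*} [Group G] [Ring S] (A : G → AddSubgroup S) : Prop :=
  (∀ g : G, A g * A g⁻¹ * A g = A g) ∧
  ∃ ε : G → S, ∀ g : G, ε g ∈ A g * A g⁻¹ ∧ ∀ x ∈ A g, ε g * x = x ∧ x * ε g⁻¹ = x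

namespace EpsStrongAux

lemma mul_le' {R : Type*} [NonUnitalNonAssocRing R] {M N P : AddSubgroup R}
    (h : ∀ m ∈ M, ∀ n ∈ N, m * n ∈ P) : M * N ≤ P := by
  intro x hx
  have hx' : x ∈ M.toAddSubmonoid * N.toAddSubmonoid := hx
  exact AddSubmonoid.mul_induction_on hx' h (fun a b ha hb => P.add_mem ha hb)

lemma mul_mem_mul' {R : Type*} [NonUnitalNonAssocRing R] {M N : AddSubgroup R}
    {m n : R} (hm : m ∈ M) (hn : n ∈ N) : m * n ∈ M * N :=
  AddSubmonoid.mul_mem_mul hm hn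

lemma mul_ind {R : Type*} [NonUnitalNonAssocRing R] {M N : AddSubgroup R}
    {p : R → Prop} {x : R} (hx : x ∈ M * N)
    (hmul : ∀ m ∈ M, ∀ n ∈ N, p (m * n)) (hadd : ∀ a b, p a → p b → p (a + b)) : p x := by
  have hx' : x ∈ M.toAddSubmonoid * N.toAddSubmonoid := hx
  exact AddSubmonoid.mul_induction_on hx' hmul hadd

lemma mul_mono {R : Type*} [NonUnitalNonAssocRing R] {M M' N N' : AddSubgroup R}
    (h1 : M ≤ M') (h2 : N ≤ N') : M * N ≤ M' * N' :=
  mul_le' fun m hm n hn => mul_mem_mul' (h1 hm) (h2 hn)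

/-- Key noetherian lemma: a family of central idempotents in a left noetherian ring
admits a finite "join" acting as a right identity on all of them. -/
lemma key {T : Type*} [Ring T] [IsNoetherianRing T] {ι : Type*} (e : ι → T)
    (hcomm : ∀ i r, e i * r = r * e i) (hidem : ∀ i, e i * e i = e i) :
    ∃ (F : Finset ι) (u : T), (∀ r, u * r = r * u) ∧ (∀ i, e i * u = e i) ∧
      u ∈ ⨆ i ∈ F, Ideal.span {e i} := by
  classical
  set sp : ι → Ideal T := fun i => Ideal.span {e i} with hsp
  obtain ⟨M, ⟨F0, rfl⟩, hmax⟩ :=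
    (IsWellFounded.wf (α := Ideal T) (r := (· > ·))).has_min
      {P : Ideal T | ∃ F : Finset ι, P = ⨆ i ∈ F, sp i} ⟨⨆ i ∈ (∅ : Finset ι), sp i, ∅, rfl⟩
  have hdom : ∀ i : ι, e i ∈ ⨆ j ∈ F0, sp j := by
    intro i
    have hle : (⨆ j ∈ F0, sp j) ≤ ⨆ j ∈ insert i F0, sp j :=
      biSup_mono fun j hj => Finset.mem_insert_of_mem hj
    have hnot := hmax _ ⟨insert i F0, rfl⟩
    have heq : (⨆ j ∈ insert i F0, sp j) = ⨆ j ∈ F0, sp j := by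
      by_contra hne
      exact hnot (lt_of_le_of_ne hle (Ne.symm hne))
    have : e i ∈ ⨆ j ∈ insert i F0, sp j :=
      le_biSup sp (Finset.mem_insert_self i F0) (Ideal.subset_span rfl)
    rwa [heq] at this
  have join : ∀ F : Finset ι, ∃ u : T, (∀ r, u * r = r * u) ∧ (∀ i ∈ F, e i * u = e i) ∧
      u ∈ ⨆ i ∈ F, sp i := by
    intro F
    induction F using Finset.induction_on with
    | empty => exact ⟨0, by simp, by simp, zero_mem _⟩
    | insert _ _ ha _ =>
      rename_i a F ih
      obtain ⟨u, hc, hF, hm⟩ := ih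
      refine ⟨u + e a - u * e a, ?_, ?_, ?_⟩
      · intro r
        have h1 : (u * e a) * r = r * (u * e a) := by
          rw [mul_assoc, hcomm a r, ← mul_assoc, hc r, mul_assoc]
        rw [sub_mul, add_mul, mul_sub, mul_add, hc r, hcomm a r, h1]
      · intro i hi
        rcases Finset.mem_insert.mp hi with rfl | hi
        · have h2 : e i * (u * e i) = e i * u := by
            rw [← hcomm i u, ← mul_assoc, hidem i]
          rw [mul_sub, mul_add, hidem i, h2]
          abel
        · have h3 : e i * (u * e a) = e i * e a := by
            rw [← mul_assoc, hF i hi]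
          rw [mul_sub, mul_add, hF i hi, h3]
          abel
      · have hle : (⨆ i ∈ F, sp i) ≤ ⨆ i ∈ insert a F, sp i :=
          biSup_mono fun j hj => Finset.mem_insert_of_mem hj
        have hea : e a ∈ ⨆ i ∈ insert a F, sp i :=
          le_biSup sp (Finset.mem_insert_self a F) (Ideal.subset_span rfl)
        have huea : u * e a ∈ ⨆ i ∈ insert a F, sp i := by
          have : u * e a ∈ sp a := by
            rw [hsp]
            exact Ideal.mul_mem_left _ u (Ideal.subset_span rfl)
          exact le_biSup sp (Finset.mem_insert_self a F) this
        exact sub_mem (add_mem (hle hm) hea) huea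
  obtain ⟨u, hc, hF0, hm⟩ := join F0
  have habs : ∀ x ∈ ⨆ i ∈ F0, sp i, x * u = x := by
    intro x hx
    refine Submodule.iSup_induction _ (motive := fun x => x * u = x) hx ?_ (by simp) ?_
    · intro i x hxi
      by_cases hi : i ∈ F0
      · rw [iSup_pos hi] at hxi
        obtain ⟨r, rfl⟩ := Ideal.mem_span_singleton'.mp hxi
        rw [mul_assoc, hF0 i hi]
      · rw [iSup_neg hi] at hxi
        rw [(Submodule.mem_bot T).mp hxi, zero_mul]
    · intro x y hx hy
      rw [add_mul, hx, hy]
  exact ⟨F0, u, hc, fun i => habs _ (hdom i), hm⟩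

section Basic
variable {G S : Type*} [Group G] [Ring S] (A : G → AddSubgroup S)
  (hmul : ∀ g h : G, ∀ x ∈ A g, ∀ y ∈ A h, x * y ∈ A (g * h))
  (ε : G → S) (hε : ∀ g : G, ε g ∈ A g * A g⁻¹ ∧ ∀ x ∈ A g, ε g * x = x ∧ x * ε g⁻¹ = x)

include hmul in
lemma I_le_one (g : G) : A g * A g⁻¹ ≤ A 1 := by
  have := mul_le' (M := A g) (N := A g⁻¹) (P := A (g * g⁻¹)) (fun m hm n hn => hmul _ _ m hm n hn)
  rwa [mul_inv_cancel] at this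

include hmul hε in
lemma eps_mem_one (g : G) : ε g ∈ A 1 := I_le_one A hmul g ((hε g).1)

include hε in
lemma eps_left (g : G) : ∀ x ∈ A g * A g⁻¹, ε g * x = x := by
  intro x hx
  refine mul_ind (p := fun y => ε g * y = y) hx (fun m hm n hn => ?_)
    (fun a b ha hb => by rw [mul_add, ha, hb])
  rw [← mul_assoc, ((hε g).2 m hm).1]

include hε in
lemma eps_right (g : G) : ∀ x ∈ A g * A g⁻¹, x * ε g = x := by
  intro x hx
  refine mul_ind (p := fun y => y * ε g = y) hx (fun m hm n hn => ?_)
    (fun a b ha hb => by rw [add_mul, ha, hb])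
  have := ((hε g⁻¹).2 n hn).2
  rw [inv_inv] at this
  rw [mul_assoc, this]

include hmul in
lemma I_mul_left (g : G) {r x : S} (hr : r ∈ A 1) (hx : x ∈ A g * A g⁻¹) :
    r * x ∈ A g * A g⁻¹ := by
  refine mul_ind (p := fun y => r * y ∈ A g * A g⁻¹) hx (fun m hm n hn => ?_)
    (fun a b ha hb => by rw [mul_add]; exact add_mem ha hb)
  rw [← mul_assoc]
  have : r * m ∈ A g := by have := hmul 1 g r hr m hm; rwa [one_mul] at this
  exact mul_mem_mul' this hn

include hmul in
lemma I_mul_right (g : G) {r x : S} (hr : r ∈ A 1) (hx : x ∈ A g * A g⁻¹) :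
    x * r ∈ A g * A g⁻¹ := by
  refine mul_ind (p := fun y => y * r ∈ A g * A g⁻¹) hx (fun m hm n hn => ?_)
    (fun a b ha hb => by rw [add_mul]; exact add_mem ha hb)
  rw [mul_assoc]
  have : n * r ∈ A g⁻¹ := by have := hmul g⁻¹ 1 n hn r hr; rwa [mul_one] at this
  exact mul_mem_mul' hm this

include hmul hε in
lemma eps_comm (g : G) {r : S} (hr : r ∈ A 1) : ε g * r = r * ε g := by
  have h1 : ε g * r ∈ A g * A g⁻¹ := I_mul_right A hmul g hr (hε g).1
  have h2 : r * ε g ∈ A g * A g⁻¹ := I_mul_left A hmul g hr (hε g).1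
  calc ε g * r = (ε g * r) * ε g := (eps_right A ε hε g _ h1).symm
    _ = ε g * (r * ε g) := by rw [mul_assoc]
    _ = r * ε g := eps_left A ε hε g _ h2

include hε in
lemma eps_idem (g : G) : ε g * ε g = ε g := eps_left A ε hε g _ (hε g).1

end Basic

section Fiber
variable {G S : Type*} [Group G] [Ring S]
  {Q : Type*} (f : G → Q) (A : G → AddSubgroup S)

/-- Induction over membership in a fiber-sup. -/
lemma B_ind {C : Q} {p : S → Prop} {x : S}
    (hx : x ∈ ⨆ g ∈ {g : G | f g = C}, A g)
    (mem : ∀ g, f g = C → ∀ y ∈ A g, p y) (zero : p 0)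
    (add : ∀ a b, p a → p b → p (a + b)) : p x := by
  rw [← iSup_subtype''] at hx
  exact AddSubgroup.iSup_induction (C := p)
    (fun g : {g : G | f g = C} => A g.1) hx (fun i y hy => mem i.1 i.2 y hy) zero add

lemma A_le_B {C : Q} {g : G} (hg : f g = C) : A g ≤ ⨆ g ∈ {g : G | f g = C}, A g :=
  le_biSup A hg

variable [DecidableEq G] [DecidableEq Q]

lemma isInternal_B (hint : DirectSum.IsInternal A) :
    DirectSum.IsInternal (fun C : Q => ⨆ g ∈ {g : G | f g = C}, A g) := by
  classical
  set B : Q → AddSubgroup S := fun C => ⨆ g ∈ {g : G | f g = C}, A g with hB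
  letI : DirectSum.Decomposition A := hint.chooseDecomposition
  set π : G → (S →+ S) := fun h =>
    { toFun := fun y => (DirectSum.decompose A y h : S)
      map_zero' := by simp
      map_add' := fun a b => by simp }
  have hπ_ne : ∀ g h (y : S), y ∈ A g → g ≠ h → π h y = 0 := fun g h y hy hne =>
    DirectSum.decompose_of_mem_ne A hy hne
  have claim1 : ∀ (C : Q) (y : S), y ∈ B C → ∀ h : G, f h ≠ C → π h y = 0 := by
    intro C y hy h hh
    refine B_ind f A (p := fun y => π h y = 0) hy (fun g hg z hz => ?_) (map_zero _) ?_
    · exact hπ_ne g h z hz (fun hgh => hh (hgh ▸ hg))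
    · intro a b ha hb; rw [map_add, ha, hb, add_zero]
  have claim2 : ∀ y : S, (∀ h : G, π h y = 0) → y = 0 := by
    intro y hy
    have h0 : DirectSum.decompose A y = 0 := DFinsupp.ext fun h => Subtype.ext (hy h)
    have := congrArg (DirectSum.decompose A).symm h0
    rw [Equiv.symm_apply_apply] at this
    rw [this, ← DirectSum.decomposeAddEquiv_symm_apply, map_zero]
  constructor
  · rw [injective_iff_map_eq_zero]
    intro x hx
    refine DFinsupp.ext fun C0 => ?_
    have hsum : ∑ C ∈ x.support, ((x C : S)) = 0 := by
      have h1 : DirectSum.coeAddMonoidHom B x = ∑ C ∈ x.support, ((x C : S)) :=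
        DirectSum.coeAddMonoidHom_eq_dfinsuppSum B x
      rw [← h1]; exact hx
    refine Subtype.ext (?_ : ((x C0 : S)) = (0 : S))
    by_cases hC0 : C0 ∈ x.support
    · have hsplit : ((x C0 : S)) + ∑ C ∈ x.support.erase C0, ((x C : S)) = 0 :=
        (Finset.add_sum_erase _ (fun C => ((x C : S))) hC0).trans hsum
      have hz : ∀ h : G, f h = C0 → π h (∑ C ∈ x.support.erase C0, ((x C : S))) = 0 := by
        intro h hh
        rw [map_sum]
        refine Finset.sum_eq_zero fun C hC => ?_
        refine claim1 C _ (x C).2 h ?_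
        intro he
        exact (Finset.mem_erase.mp hC).1 (by rw [← he, hh])
      refine claim2 _ fun h => ?_
      by_cases hh : f h = C0
      · have := congrArg (π h) hsplit
        rw [map_add, hz h hh, add_zero, map_zero] at this
        exact this
      · exact claim1 C0 _ (x C0).2 h hh
    · have := DFinsupp.notMem_support_iff.mp hC0
      rw [this, ZeroMemClass.coe_zero]
  · intro y
    have hy := DirectSum.sum_support_decompose A y
    refine ⟨∑ g ∈ (DirectSum.decompose A y).support,
      DirectSum.of (fun C => B C) (f g) ⟨(DirectSum.decompose A y g : S),
        A_le_B f A rfl (DirectSum.decompose A y g).2⟩, ?_⟩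
    rw [map_sum]
    simp_rw [DirectSum.coeAddMonoidHom_of]
    exact hy

end Fiber

end EpsStrongAux

open EpsStrongAux in
/-- If `S` is an epsilon-strongly `G`-graded ring whose principal component `R = S_e` is
left or right noetherian, then for any normal subgroup `N ⊴ G` the induced `G/N`-grading
`S_C = ⊕_{g ∈ C} S_g` (for cosets `C ∈ G/N`) is an epsilon-strong `G/N`-grading of `S`. -/
theorem inducedQuotientGrading_epsilonStrong
    {G S : Type*} [Group G] [Ring S] [DecidableEq G]
    (A : G → AddSubgroup S) (hgrading : IsGrading A) (heps : IsEpsilonStrong A)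
    (R : Subring S) (hR : (R : Set S) = (A 1 : Set S))
    (hnoeth : IsNoetherianRing R ∨ IsNoetherianRing (↥R)ᵐᵒᵖ)
    (N : Subgroup G) [N.Normal] [DecidableEq (G ⧸ N)] :
    IsGrading (fun C : G ⧸ N => ⨆ g ∈ {g : G | (QuotientGroup.mk g : G ⧸ N) = C}, A g) ∧
    IsEpsilonStrong
      (fun C : G ⧸ N => ⨆ g ∈ {g : G | (QuotientGroup.mk g : G ⧸ N) = C}, A g) := by
  classical
  obtain ⟨hint, hmul⟩ := hgrading
  obtain ⟨hsym, ε, hε⟩ := heps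
  set f : G → G ⧸ N := fun g => (QuotientGroup.mk g : G ⧸ N) with hf
  have hfmul : ∀ g h : G, f (g * h) = f g * f h := fun _ _ => rfl
  have hfinv : ∀ g : G, f g⁻¹ = (f g)⁻¹ := fun _ => rfl
  set B : G ⧸ N → AddSubgroup S := fun C => ⨆ g ∈ {g : G | f g = C}, A g with hBdef
  have hRmem : ∀ x : S, x ∈ R ↔ x ∈ A 1 := by
    intro x
    rw [← SetLike.mem_coe, hR, SetLike.mem_coe]
  -- multiplicativity of the induced grading
  have hBmul : ∀ C D : G ⧸ N, ∀ x ∈ B C, ∀ y ∈ B D, x * y ∈ B (C * D) := by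
    intro C D x hx
    refine B_ind f A (p := fun x => ∀ y ∈ B D, x * y ∈ B (C * D)) hx ?_ ?_ ?_
    · intro g hg z hz y hy
      refine B_ind f A (p := fun y => z * y ∈ B (C * D)) hy ?_ ?_ ?_
      · intro h hh w hw
        exact A_le_B f A (by rw [hfmul, hg, hh]) (hmul g h z hz w hw)
      · rw [mul_zero]; exact zero_mem _
      · intro a b ha hb; rw [mul_add]; exact add_mem ha hb
    · intro y hy; rw [zero_mul]; exact zero_mem _
    · intro a b ha hb y hy; rw [add_mul]
      exact add_mem (ha y hy) (hb y hy)
  have hBmul_le : ∀ C D : G ⧸ N, B C * B D ≤ B (C * D) :=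
    fun C D => mul_le' (fun m hm n hn => hBmul C D m hm n hn)
  -- existence of the quotient epsilons
  have hexists : ∀ C : G ⧸ N, ∃ u : S, (∀ r ∈ A 1, u * r = r * u) ∧
      (∀ h : G, f h = C → ε h * u = ε h) ∧ u ∈ B C * B C⁻¹ := by
    intro C
    have hIle : ∀ g : G, f g = C → A g * A g⁻¹ ≤ B C * B C⁻¹ := by
      intro g hg
      exact mul_mono (A_le_B f A hg) (A_le_B f A (by rw [hfinv, hg]))
    rcases hnoeth with hnl | hnr
    · haveI := hnl
      set e : {g : G // f g = C} → ↥R := fun i =>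
        ⟨ε i.1, (hRmem _).mpr (eps_mem_one A hmul ε hε i.1)⟩ with he
      have hcomm : ∀ i r, e i * r = r * e i := by
        intro i r
        refine Subtype.ext ?_
        exact eps_comm A hmul ε hε i.1 ((hRmem _).mp r.2)
      have hidem : ∀ i, e i * e i = e i := fun i => Subtype.ext (eps_idem A ε hε i.1)
      obtain ⟨F, u, hc, hu, hm⟩ := key e hcomm hidem
      refine ⟨(u : S), ?_, ?_, ?_⟩
      · intro r hr
        exact congrArg Subtype.val (hc ⟨r, (hRmem r).mpr hr⟩)
      · intro h hh
        exact congrArg Subtype.val (hu ⟨h, hh⟩)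
      · refine Submodule.iSup_induction (motive := fun v : ↥R => (v : S) ∈ B C * B C⁻¹) _ hm
          ?_ (by simp only [MulOpposite.unop_zero, ZeroMemClass.coe_zero]; exact zero_mem _) ?_
        · intro i v hv
          by_cases hi : i ∈ F
          · rw [iSup_pos hi] at hv
            obtain ⟨r, rfl⟩ := Ideal.mem_span_singleton'.mp hv
            have : ((r * e i : ↥R) : S) = (r : S) * ε i.1 := rfl
            rw [this]
            exact hIle i.1 i.2
              (I_mul_left A hmul i.1 ((hRmem _).mp r.2) (hε i.1).1)
          · rw [iSup_neg hi] at hv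
            rw [(Submodule.mem_bot _).mp hv]
            simpa using zero_mem (B C * B C⁻¹)
        · intro a b ha hb
          rw [Subring.coe_add]
          exact add_mem ha hb
    · haveI := hnr
      set e : {g : G // f g = C} → (↥R)ᵐᵒᵖ := fun i =>
        MulOpposite.op ⟨ε i.1, (hRmem _).mpr (eps_mem_one A hmul ε hε i.1)⟩ with he
      have hcomm : ∀ i r, e i * r = r * e i := by
        intro i r
        apply MulOpposite.unop_injective
        refine Subtype.ext ?_
        exact (eps_comm A hmul ε hε i.1 ((hRmem _).mp r.unop.2)).symm
      have hidem : ∀ i, e i * e i = e i := by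
        intro i
        apply MulOpposite.unop_injective
        exact Subtype.ext (eps_idem A ε hε i.1)
      obtain ⟨F, u, hc, hu, hm⟩ := key e hcomm hidem
      have hcS : ∀ r ∈ A 1, (u.unop : S) * r = r * (u.unop : S) := by
        intro r hr
        have := hc (MulOpposite.op ⟨r, (hRmem r).mpr hr⟩)
        have := congrArg (fun z => ((MulOpposite.unop z : ↥R) : S)) this
        simpa using this.symm
      refine ⟨((u.unop : ↥R) : S), hcS, ?_, ?_⟩
      · intro h hh
        have := hu ⟨h, hh⟩
        have h2 := congrArg (fun z => ((MulOpposite.unop z : ↥R) : S)) this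
        simp only [MulOpposite.unop_mul, MulOpposite.unop_op, Subring.coe_mul] at h2
        rw [← hcS (ε h) (eps_mem_one A hmul ε hε h)]
        exact h2
      · refine Submodule.iSup_induction
          (motive := fun v : (↥R)ᵐᵒᵖ => ((MulOpposite.unop v : ↥R) : S) ∈ B C * B C⁻¹) _ hm
          ?_ (by simp only [MulOpposite.unop_zero, ZeroMemClass.coe_zero]; exact zero_mem _) ?_
        · intro i v hv
          by_cases hi : i ∈ F
          · rw [iSup_pos hi] at hv
            obtain ⟨r, rfl⟩ := Ideal.mem_span_singleton'.mp hv
            have : ((MulOpposite.unop (r * e i) : ↥R) : S)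
                = ε i.1 * ((MulOpposite.unop r : ↥R) : S) := rfl
            rw [this]
            exact hIle i.1 i.2
              (I_mul_right A hmul i.1 ((hRmem _).mp r.unop.2) (hε i.1).1)
          · rw [iSup_neg hi] at hv
            rw [(Submodule.mem_bot _).mp hv]
            simpa using zero_mem (B C * B C⁻¹)
        · intro a b ha hb
          simp only [MulOpposite.unop_add, Subring.coe_add]
          exact add_mem ha hb
  choose ε' hε'c hε'l hε'mem using hexists
  -- left identity on B C
  have hleft : ∀ C : G ⧸ N, ∀ x ∈ B C, ε' C * x = x := by
    intro C x hx
    refine B_ind f A (p := fun x => ε' C * x = x) hx ?_ (by rw [mul_zero]) ?_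
    · intro h hh z hz
      have h1 : ε h * z = z := ((hε h).2 z hz).1
      calc ε' C * z = ε' C * (ε h * z) := by rw [h1]
        _ = (ε' C * ε h) * z := by rw [mul_assoc]
        _ = (ε h * ε' C) * z := by rw [hε'c C (ε h) (eps_mem_one A hmul ε hε h)]
        _ = ε h * z := by rw [hε'l C h hh]
        _ = z := h1
    · intro a b ha hb; rw [mul_add, ha, hb]
  -- right identity
  have hright : ∀ C : G ⧸ N, ∀ x ∈ B C, x * ε' C⁻¹ = x := by
    intro C x hx
    refine B_ind f A (p := fun x => x * ε' C⁻¹ = x) hx ?_ (by rw [zero_mul]) ?_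
    · intro h hh z hz
      have h1 : z * ε h⁻¹ = z := ((hε h).2 z hz).2
      have h2 : ε h⁻¹ * ε' C⁻¹ = ε h⁻¹ := hε'l C⁻¹ h⁻¹ (by rw [hfinv, hh])
      calc z * ε' C⁻¹ = (z * ε h⁻¹) * ε' C⁻¹ := by rw [h1]
        _ = z * (ε h⁻¹ * ε' C⁻¹) := by rw [mul_assoc]
        _ = z * ε h⁻¹ := by rw [h2]
        _ = z := h1
    · intro a b ha hb; rw [add_mul, ha, hb]
  refine ⟨⟨isInternal_B f A hint, hBmul⟩, ?_, ε', ?_⟩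
  · -- symmetry
    intro C
    refine le_antisymm ?_ ?_
    · have h1 : B C * B C⁻¹ * B C ≤ B (C * C⁻¹ * C) :=
        le_trans (mul_mono (hBmul_le C C⁻¹) le_rfl) (hBmul_le (C * C⁻¹) C)
      rwa [mul_inv_cancel, one_mul] at h1
    · intro x hx
      rw [← hleft C x hx]
      exact mul_mem_mul' (hε'mem C) hx
  · intro C
    exact ⟨hε'mem C, fun x hx => ⟨hleft C x hx, hright C x hx⟩⟩
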